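/- Let R i = PM i 0 * PM i 1 * PM i 2 and C j = PM 0 j * PM 1 j * PM 2 j. Then R 0 + R 1 + R 2 + C 0 + C 1 − C 2 = (6 : ℂ) • 1 as 4×4 matrices; consequently, for every density matrix ρ (a positive semidefinite matrix in Matrix (Fin 2 × Fin 2) (Fin 2 × Fin 2) ℂ with trace 1), trace (ρ * R 0) + trace (ρ * R 1) + trace (ρ * R 2) + trace (ρ * C 0) + trace (ρ * C 1) − trace (ρ * C 2) = 6. (Thus every quantum state reaches the value 6, exceeding the noncontextual bound 4: state-independent contextuality.) -/

import Mathlib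

open Matrix Complex Kronecker
open scoped ComplexOrder

noncomputable def σx : Matrix (Fin 2) (Fin 2) ℂ := !![0, 1; 1, 0]
noncomputable def σy : Matrix (Fin 2) (Fin 2) ℂ := !![0, -I; I, 0]
noncomputable def σz : Matrix (Fin 2) (Fin 2) ℂ := !![1, 0; 0, -1]

noncomputable def PM : Fin 3 → Fin 3 → Matrix (Fin 2 × Fin 2) (Fin 2 × Fin 2) ℂ :=
  ![![σz ⊗ₖ 1, 1 ⊗ₖ σz, σz ⊗ₖ σz],
    ![1 ⊗ₖ σx, σx ⊗ₖ 1, σx ⊗ₖ σx],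
    ![σz ⊗ₖ σx, σx ⊗ₖ σz, σy ⊗ₖ σy]]
noncomputable def R (i : Fin 3) : Matrix (Fin 2 × Fin 2) (Fin 2 × Fin 2) ℂ :=
  PM i 0 * PM i 1 * PM i 2

noncomputable def C (j : Fin 3) : Matrix (Fin 2 × Fin 2) (Fin 2 × Fin 2) ℂ :=
  PM 0 j * PM 1 j * PM 2 j

lemma key : R 0 + R 1 + R 2 + C 0 + C 1 - C 2
    = (6 : ℂ) • (1 : Matrix (Fin 2 × Fin 2) (Fin 2 × Fin 2) ℂ) := by
  ext ⟨a, b⟩ ⟨c, d⟩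
  simp only [R, C, PM, σx, σy, σz, Matrix.add_apply, Matrix.sub_apply, Matrix.smul_apply, mul_apply,
    Matrix.cons_val_zero, Matrix.cons_val_one, Matrix.head_cons, Matrix.cons_val_two,
    Matrix.tail_cons, kroneckerMap_apply, Fintype.sum_prod_type, Fin.sum_univ_two,
    one_apply, smul_eq_mul]
  fin_cases a <;> fin_cases b <;> fin_cases c <;> fin_cases d <;>
    norm_num [Matrix.one_apply, Prod.ext_iff, Complex.ext_iff, pow_succ, Complex.I_re, Complex.I_im]

theorem peres_mermin_state_independent_value :
    R 0 + R 1 + R 2 + C 0 + C 1 - C 2 = (6 : ℂ) • (1 : Matrix (Fin 2 × Fin 2) (Fin 2 × Fin 2) ℂ) ∧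
    ∀ ρ : Matrix (Fin 2 × Fin 2) (Fin 2 × Fin 2) ℂ, ρ.PosSemidef → ρ.trace = 1 →
      (ρ * R 0).trace + (ρ * R 1).trace + (ρ * R 2).trace +
        (ρ * C 0).trace + (ρ * C 1).trace - (ρ * C 2).trace = 6 := by
  refine ⟨key, fun ρ _ htr => ?_⟩
  have : (ρ * R 0).trace + (ρ * R 1).trace + (ρ * R 2).trace +
      (ρ * C 0).trace + (ρ * C 1).trace - (ρ * C 2).trace
      = (ρ * (R 0 + R 1 + R 2 + C 0 + C 1 - C 2)).trace := by
    simp [Matrix.mul_add, Matrix.mul_sub, Matrix.trace_add, Matrix.trace_sub]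
  rw [this, key]
  simp [Matrix.mul_smul, htr]
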